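/- Assume conditions (C1), (C2) and (C3) hold for Γ and h, let ρ_k > 0, p_k ≥ h(ρ_k), and let p ∈ ℝ with p + p_k > 0. Then for every ρ > 0 the partial derivative of the Hugoniot function with respect to the density, ∂Φ/∂ρ(p,ρ) = −Γ(ρ_k)ρ_k(h'(ρ) − ((p+p_k)/2)Γ'(ρ)) − Γ(ρ_k)(Γ(ρ) + ρΓ'(ρ))·((p_k − h(ρ_k))/Γ(ρ_k) + (p+p_k)/2), is strictly negative; in particular, ρ ↦ Φ(p,ρ) is strictly decreasing on (0,∞). -/

import Mathlib

open Set Filter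

/-- The Hugoniot function `Φ(p,ρ)` associated with the Mie-Grüneisen EOS
`p(ρ,e) = Γ(ρ)ρe + h(ρ)` and the fixed state `(ρ_k, p_k)`. -/
noncomputable def hugoniot (Γ h : ℝ → ℝ) (ρk pk p ρ : ℝ) : ℝ :=
  Γ ρk * ρk * (p - h ρ) - Γ ρ * ρ * (pk - h ρk)
    - 1 / 2 * Γ ρk * Γ ρ * (p + pk) * (ρ - ρk)

/-- Under conditions (C1), (C2) and (C3), with `p_k ≥ h(ρ_k)` and
`p + p_k > 0`, the partial derivative of the Hugoniot function with respect
to the density equals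
`-Γ(ρ_k)ρ_k(h'(ρ) - ((p+p_k)/2)Γ'(ρ))
  - Γ(ρ_k)(Γ(ρ) + ρΓ'(ρ))((p_k - h(ρ_k))/Γ(ρ_k) + (p+p_k)/2)`
and is strictly negative; in particular `ρ ↦ Φ(p,ρ)` is strictly
decreasing on `(0,∞)`. -/
theorem hugoniot_strictAnti
    (Γ h : ℝ → ℝ) (Γinf ρk pk p : ℝ)
    (hΓd : ∀ ρ > (0 : ℝ), DifferentiableAt ℝ Γ ρ)
    (hΓd2 : ∀ ρ > (0 : ℝ), DifferentiableAt ℝ (deriv Γ) ρ)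
    (hhd : ∀ ρ > (0 : ℝ), DifferentiableAt ℝ h ρ)
    (hhd2 : ∀ ρ > (0 : ℝ), DifferentiableAt ℝ (deriv h) ρ)
    -- condition (C1)
    (hC1a : ∀ ρ > (0 : ℝ), deriv Γ ρ ≤ 0)
    (hC1b : ∀ ρ > (0 : ℝ), 0 ≤ deriv (fun x => x * Γ x) ρ)
    (hC1c : ∀ ρ > (0 : ℝ), 0 ≤ deriv (deriv (fun x => x * Γ x)) ρ)
    -- condition (C2)
    (hΓinf : 0 < Γinf)
    (hC2a : ∀ ρ > (0 : ℝ), Γinf ≤ Γ ρ)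
    (hC2b : ∀ ρ > (0 : ℝ), Γ ρ ≤ Γinf + 2)
    -- condition (C3)
    (hC3a : ∀ ρ > (0 : ℝ), 0 ≤ deriv h ρ)
    (hC3b : ∀ ρ > (0 : ℝ), 0 ≤ deriv (deriv h) ρ)
    (hρk : 0 < ρk) (hpk : h ρk ≤ pk) (hppk : 0 < p + pk) :
    (∀ ρ > (0 : ℝ),
      deriv (fun x => hugoniot Γ h ρk pk p x) ρ =
        -(Γ ρk * ρk * (deriv h ρ - (p + pk) / 2 * deriv Γ ρ))
          - Γ ρk * (Γ ρ + ρ * deriv Γ ρ)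
            * ((pk - h ρk) / Γ ρk + (p + pk) / 2) ∧
      deriv (fun x => hugoniot Γ h ρk pk p x) ρ < 0) ∧
    StrictAntiOn (fun ρ => hugoniot Γ h ρk pk p ρ) (Ioi 0) :=  by
  have hΓk : 0 < Γ ρk := lt_of_lt_of_le hΓinf (hC2a ρk hρk)
  have hΓkne : Γ ρk ≠ 0 := ne_of_gt hΓk
  -- derivative computation
  have key : ∀ ρ > (0 : ℝ),
      HasDerivAt (fun x => hugoniot Γ h ρk pk p x)
        (-(Γ ρk * ρk * (deriv h ρ - (p + pk) / 2 * deriv Γ ρ))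
          - Γ ρk * (Γ ρ + ρ * deriv Γ ρ)
            * ((pk - h ρk) / Γ ρk + (p + pk) / 2)) ρ := by
    intro ρ hρ
    have hΓ := (hΓd ρ hρ).hasDerivAt
    have hh := (hhd ρ hρ).hasDerivAt
    have t1 : HasDerivAt (fun x => Γ ρk * ρk * (p - h x))
        (Γ ρk * ρk * (0 - deriv h ρ)) ρ :=
      ((hasDerivAt_const ρ p).sub hh).const_mul _
    have t2 : HasDerivAt (fun x => Γ x * x * (pk - h ρk))
        ((deriv Γ ρ * ρ + Γ ρ * 1) * (pk - h ρk)) ρ :=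
      (hΓ.mul (hasDerivAt_id ρ)).mul_const _
    have t3 : HasDerivAt (fun x => 1 / 2 * Γ ρk * Γ x * (p + pk) * (x - ρk))
        ((1 / 2 * Γ ρk * deriv Γ ρ * (p + pk)) * (ρ - ρk)
          + (1 / 2 * Γ ρk * Γ ρ * (p + pk)) * 1) ρ :=
      ((hΓ.const_mul (1 / 2 * Γ ρk)).mul_const (p + pk)).mul
        ((hasDerivAt_id ρ).sub_const ρk)
    have H := (t1.sub t2).sub t3
    have heq : Γ ρk * ρk * (0 - deriv h ρ) - (deriv Γ ρ * ρ + Γ ρ * 1) * (pk - h ρk)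
        - ((1 / 2 * Γ ρk * deriv Γ ρ * (p + pk)) * (ρ - ρk)
          + (1 / 2 * Γ ρk * Γ ρ * (p + pk)) * 1)
        = -(Γ ρk * ρk * (deriv h ρ - (p + pk) / 2 * deriv Γ ρ))
          - Γ ρk * (Γ ρ + ρ * deriv Γ ρ)
            * ((pk - h ρk) / Γ ρk + (p + pk) / 2) := by
      field_simp
      ring
    rw [heq] at H
    exact H
  have main : ∀ ρ > (0 : ℝ),
      deriv (fun x => hugoniot Γ h ρk pk p x) ρ =
        -(Γ ρk * ρk * (deriv h ρ - (p + pk) / 2 * deriv Γ ρ))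
          - Γ ρk * (Γ ρ + ρ * deriv Γ ρ)
            * ((pk - h ρk) / Γ ρk + (p + pk) / 2) ∧
      deriv (fun x => hugoniot Γ h ρk pk p x) ρ < 0 := by
    intro ρ hρ
    have hd := (key ρ hρ).deriv
    refine ⟨hd, ?_⟩
    rw [hd]
    have hB : 0 ≤ Γ ρ + ρ * deriv Γ ρ := by
      have := hC1b ρ hρ
      have hder : deriv (fun x => x * Γ x) ρ = 1 * Γ ρ + ρ * deriv Γ ρ :=
        ((hasDerivAt_id ρ).mul (hΓd ρ hρ).hasDerivAt).deriv
      rw [hder] at this; linarith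
    have hC : 0 < (pk - h ρk) / Γ ρk + (p + pk) / 2 := by
      have h1 : 0 ≤ (pk - h ρk) / Γ ρk := div_nonneg (by linarith) (le_of_lt hΓk)
      linarith
    have hh' := hC3a ρ hρ
    have hΓ' := hC1a ρ hρ
    rcases lt_or_eq_of_le hΓ' with hlt | heq0
    · have hA : 0 < deriv h ρ - (p + pk) / 2 * deriv Γ ρ := by nlinarith
      nlinarith [mul_nonneg (mul_nonneg (le_of_lt hΓk) hB) (le_of_lt hC),
        mul_pos (mul_pos hΓk hρk) hA]
    · have hΓρ : 0 < Γ ρ := lt_of_lt_of_le hΓinf (hC2a ρ hρ)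
      have hB' : 0 < Γ ρ + ρ * deriv Γ ρ := by nlinarith
      have hA : 0 ≤ deriv h ρ - (p + pk) / 2 * deriv Γ ρ := by nlinarith
      nlinarith [mul_pos (mul_pos hΓk hB') hC,
        mul_nonneg (mul_nonneg (le_of_lt hΓk) (le_of_lt hρk)) hA]
  refine ⟨main, ?_⟩
  have hcont : ContinuousOn (fun ρ => hugoniot Γ h ρk pk p ρ) (Ioi 0) :=
    fun x hx => ((key x hx).differentiableAt.continuousAt).continuousWithinAt
  have := strictAntiOn_of_deriv_neg (convex_Ioi (0:ℝ)) hcont ?_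
  · exact this
  · intro x hx
    rw [interior_Ioi] at hx
    exact (main x hx).2
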